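/- If W' : F_q → O' is a degradation of W : F_q → O and G is a non-singular l×l matrix over F_q, then for each i ∈ {1,…,l}, the split channel W'₁^{(i)} is a degradation of W₁^{(i)}. -/
import Mathlib


/-- `W'` is a degradation of `W`: `W'(y|x) = Σ_z W''(y|z) W(z|x)` for some channel
`W'' : O → O'`. -/
def Degraded {I O O' : Type*} [Fintype O] [Fintype O']
    (W' : I → O' → ℝ) (W : I → O → ℝ) : Prop :=
  ∃ W'' : O → O' → ℝ, (∀ z y, 0 ≤ W'' z y) ∧ (∀ z, ∑ y, W'' z y = 1) ∧
    ∀ x y, W' x y = ∑ z, W'' z y * W x z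

open scoped Classical in
/-- The `i`-th split channel of one polarization step with kernel `G`. -/
noncomputable def splitCh {Fq O : Type*} [Field Fq] [Fintype Fq] {l : ℕ}
    (W : Fq → O → ℝ) (G : Matrix (Fin l) (Fin l) Fq) (i : Fin l) :
    Fq → ((Fin l → O) × (Fin i → Fq)) → ℝ :=
  fun ui yu =>
    (1 / (Fintype.card Fq : ℝ) ^ (l - 1)) *
      ∑ u : Fin l → Fq,
        if u i = ui ∧ ∀ j : Fin i, u (Fin.castLE i.isLt.le j) = yu.2 j then
          ∏ k, W (∑ r, u r * G r k) (yu.1 k)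
        else 0

/-- Degradation is preserved by the polarization step: if `W' ⪯ W`
then `W'₁^{(i)} ⪯ W₁^{(i)}` for every `i`. -/
theorem splitCh_degraded {Fq O O' : Type*} [Field Fq] [Fintype Fq]
    [Fintype O] [Fintype O'] {l : ℕ}
    (W : Fq → O → ℝ) (W' : Fq → O' → ℝ)
    (hW0 : ∀ x y, 0 ≤ W x y) (hW1 : ∀ x, ∑ y, W x y = 1)
    (hW'0 : ∀ x y, 0 ≤ W' x y) (hW'1 : ∀ x, ∑ y, W' x y = 1)
    (G : Matrix (Fin l) (Fin l) Fq) (hG : IsUnit G.det)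
    (hdeg : Degraded W' W) :
    ∀ i : Fin l, Degraded (splitCh W' G i) (splitCh W G i) := by
  intro i
  classical
  obtain ⟨V, hV0, hV1, hVW⟩ := hdeg
  refine ⟨fun zu yu => (∏ k, V (zu.1 k) (yu.1 k)) * (if yu.2 = zu.2 then 1 else 0),
    ?_, ?_, ?_⟩
  · intro z y
    apply mul_nonneg (Finset.prod_nonneg fun k _ => hV0 _ _)
    split <;> norm_num
  · intro z
    rw [Fintype.sum_prod_type]
    simp only [mul_ite, mul_one, mul_zero, Finset.sum_ite_eq', Finset.mem_univ, if_true]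
    rw [← Fintype.piFinset_univ, ← Finset.prod_univ_sum]
    simp [hV1]
  · intro x yu
    simp only [splitCh, hVW]
    rw [Fintype.sum_prod_type]
    simp only [mul_ite, mul_one, mul_zero, ite_mul, zero_mul, Finset.sum_ite_eq,
      Finset.mem_univ, if_true]
    have key : ∀ u : Fin l → Fq,
        (∏ k, ∑ zk : O, V zk (yu.1 k) * W (∑ r, u r * G r k) zk)
          = ∑ z : Fin l → O, (∏ k, V (z k) (yu.1 k)) * ∏ k, W (∑ r, u r * G r k) (z k) := by
      intro u
      rw [Finset.prod_univ_sum, Fintype.piFinset_univ]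
      exact Finset.sum_congr rfl fun z _ => Finset.prod_mul_distrib
    simp only [key]
    have ite_sum : ∀ (p : Prop) [Decidable p] (f : (Fin l → O) → ℝ),
        (if p then ∑ z, f z else 0) = ∑ z : Fin l → O, if p then f z else 0 := by
      intro p _ f; split <;> simp
    simp only [ite_sum]
    rw [Finset.sum_comm, Finset.mul_sum]
    refine Finset.sum_congr rfl fun z _ => ?_
    simp only [Finset.mul_sum]
    refine Finset.sum_congr rfl fun u _ => ?_
    split <;> ring
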